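/- Let H be a connected hypergraph with rank k and positive Perron vector x for ρ = ρ(A_H), and let (i1,…,ik) be a tuple with (A_H)_{i1…ik} ≠ 0 maximizing x_{i1}⋯x_{ik} over all nonzero positions of A_H. Then for each j ∈ {1,…,k}, ρ x_{ij}^k ≤ d_{ij} · x_{i1}⋯x_{ik}, and hence ρ^k ≤ d_{i1} d_{i2} ⋯ d_{ik}. -/

import Mathlib

open Finset

/-- The multiset of entries of an index tuple. -/
def idxMultiset {n k : ℕ} (idx : Fin k → Fin n) : Multiset (Fin n) := ↑(List.ofFn idx)

/-- Entries of the adjacency tensor of a general hypergraph with edge set `E` and rank `k`: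
`1/(k-1)!` on tuples that are permutations of an edge of size `k`;
`(k-s+1)!/k!` on tuples whose multiset is an edge of size `s < k` with one of its
vertices repeated `k-s+1` times; `0` otherwise. -/
noncomputable def adjEntry {R : Type*} [Field R] {n : ℕ} (k : ℕ)
    (E : Finset (Finset (Fin n))) (idx : Fin k → Fin n) : R :=
  ∑ e ∈ E,
    if e.card = k ∧ idxMultiset idx = e.val then 1 / (Nat.factorial (k - 1) : R)
    else if e.card < k ∧ ∃ j ∈ e, idxMultiset idx = e.val + Multiset.replicate (k - e.card) j then
      (Nat.factorial (k - e.card + 1) : R) / (Nat.factorial k : R)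
    else 0

/-- Full contraction `A x^k = ∑ a_{i₁…i_k} x_{i₁} ⋯ x_{i_k}`. -/
noncomputable def tFull {R : Type*} [CommRing R] {n : ℕ} (k : ℕ)
    (A : (Fin k → Fin n) → R) (x : Fin n → R) : R :=
  ∑ idx : Fin k → Fin n, A idx * ∏ j, x (idx j)

/-- `(A x^{k-1})_i = ∑_{i₂,…,i_k} a_{i i₂ … i_k} x_{i₂} ⋯ x_{i_k}`. -/
noncomputable def tApply {R : Type*} [CommRing R] {n : ℕ} (k : ℕ) [NeZero k]
    (A : (Fin k → Fin n) → R) (x : Fin n → R) (i : Fin n) : R :=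
  ∑ idx : Fin k → Fin n,
    if idx 0 = i then A idx * ∏ j ∈ Finset.univ.erase 0, x (idx j) else 0

/-- Degree of a vertex: the number of edges containing it. -/
def deg {n : ℕ} (E : Finset (Finset (Fin n))) (i : Fin n) : ℕ :=
  (E.filter (fun e => i ∈ e)).card

/-- `E` has rank `k`: all edges have size at most `k` and some edge has size `k`. -/
def HasRank {n : ℕ} (E : Finset (Finset (Fin n))) (k : ℕ) : Prop :=
  (∀ e ∈ E, e.card ≤ k) ∧ ∃ e ∈ E, e.card = k

/-- Connectedness of a hypergraph: any two vertices are joined by a sequence of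
vertices consecutively sharing an edge. -/
def Conn {n : ℕ} (E : Finset (Finset (Fin n))) : Prop :=
  ∀ u v : Fin n, Relation.ReflTransGen (fun a b => ∃ e ∈ E, a ∈ e ∧ b ∈ e) u v

/-- The spectral radius of a symmetric nonnegative tensor, via the variational
characterization `ρ(A) = max { x^T (A x^{k-1}) : x ≥ 0, ∑ xᵢ^k = 1 }`. -/
noncomputable def specRad {n : ℕ} (k : ℕ) (A : (Fin k → Fin n) → ℝ) : ℝ :=
  sSup {r : ℝ | ∃ x : Fin n → ℝ, (∀ i, 0 ≤ x i) ∧ ∑ i, x i ^ k = 1 ∧ r = tFull k A x}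


section counting
variable {n : ℕ}

noncomputable def perms (m : ℕ) (M : Multiset (Fin n)) : ℕ :=
  (Finset.univ.filter fun idx : Fin m → Fin n => idxMultiset idx = M).card

lemma mem_idxMultiset {m : ℕ} (idx : Fin m → Fin n) (j : Fin m) : idx j ∈ idxMultiset idx := by
  simp only [idxMultiset, Multiset.mem_coe, List.mem_ofFn]
  exact ⟨j, rfl⟩

lemma idxMultiset_succ {m : ℕ} (idx : Fin (m+1) → Fin n) :
    idxMultiset idx = idx 0 ::ₘ idxMultiset (Fin.tail idx) := by
  simp only [idxMultiset, List.ofFn_succ]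
  rfl

noncomputable def permsAt (m : ℕ) [NeZero m] (i : Fin n) (M : Multiset (Fin n)) : ℕ :=
  (Finset.univ.filter fun idx : Fin m → Fin n => idx 0 = i ∧ idxMultiset idx = M).card

lemma permsAt_eq {m : ℕ} [NeZero m] (i : Fin n) (M : Multiset (Fin n)) :
    permsAt m i M = if i ∈ M then perms (m-1) (M.erase i) else 0 := by
  obtain ⟨m', rfl⟩ : ∃ m', m = m' + 1 :=
    ⟨m - 1, (Nat.succ_pred_eq_of_pos (Nat.pos_of_ne_zero (NeZero.ne m))).symm⟩
  by_cases hi : i ∈ M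
  · rw [if_pos hi]
    simp only [Nat.add_sub_cancel, permsAt, perms]
    apply Finset.card_bij (fun idx _ => Fin.tail idx)
    · rintro idx hidx
      simp only [mem_filter, mem_univ, true_and] at hidx ⊢
      obtain ⟨h0, hM⟩ := hidx
      rw [idxMultiset_succ, h0] at hM
      rw [← hM, Multiset.erase_cons_head]
    · rintro a ha b hb hab
      simp only [mem_filter, mem_univ, true_and] at ha hb
      funext t
      rcases Fin.eq_zero_or_eq_succ t with rfl | ⟨t', rfl⟩
      · rw [ha.1, hb.1]
      · exact congrFun hab t'
    · rintro y hy
      simp only [mem_filter, mem_univ, true_and] at hy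
      refine ⟨Fin.cons i y, ?_, ?_⟩
      · simp only [mem_filter, mem_univ, true_and]
        constructor
        · rfl
        · rw [idxMultiset_succ]
          have ht : Fin.tail (Fin.cons i y : Fin (m'+1) → Fin n) = y := rfl
          rw [show (Fin.cons i y : Fin (m'+1) → Fin n) 0 = i from rfl, ht, hy]
          exact Multiset.cons_erase hi
      · rfl
  · rw [if_neg hi]
    rw [permsAt, Finset.card_eq_zero, Finset.filter_eq_empty_iff]
    rintro idx -
    rintro ⟨h0, hM⟩
    exact hi (hM ▸ h0 ▸ mem_idxMultiset idx 0)

lemma perms_succ {m : ℕ} (M : Multiset (Fin n)) :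
    perms (m+1) M = ∑ a ∈ M.toFinset, perms m (M.erase a) := by
  have h1 : perms (m+1) M = ∑ a : Fin n, permsAt (m+1) a M := by
    rw [perms, Finset.card_eq_sum_card_fiberwise (f := fun idx => idx 0) (t := Finset.univ)
      (fun x _ => mem_univ _)]
    refine Finset.sum_congr rfl fun a _ => ?_
    rw [permsAt, Finset.filter_filter]
    congr 1
    apply Finset.filter_congr; intro idx _; simp [and_comm]
  rw [h1]
  have h2 : ∀ a : Fin n, permsAt (m+1) a M = if a ∈ M.toFinset then perms m (M.erase a) else 0 := by
    intro a; rw [permsAt_eq]; simp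
  simp only [h2]
  rw [Finset.sum_ite_mem, Finset.univ_inter]

lemma perms_zero (M : Multiset (Fin n)) : perms 0 M = if M = 0 then 1 else 0 := by
  have h : ∀ idx : Fin 0 → Fin n, idxMultiset idx = (0 : Multiset (Fin n)) := by
    intro idx; simp [idxMultiset]
  rw [perms]
  split_ifs with hM
  · subst hM
    rw [Finset.filter_true_of_mem (fun idx _ => h idx)]
    simp
  · rw [Finset.filter_false_of_mem, Finset.card_empty]
    intro idx _
    rw [h]
    exact fun e => hM e.symm

lemma perms_nodup : ∀ (m : ℕ) (M : Multiset (Fin n)), M.Nodup → M.card = m →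
    perms m M = m.factorial := by
  intro m
  induction m with
  | zero =>
    intro M _ hc
    rw [perms_zero, if_pos (Multiset.card_eq_zero.mp hc)]
    rfl
  | succ m ih =>
    intro M hM hc
    rw [perms_succ]
    have h1 : ∀ a ∈ M.toFinset, perms m (M.erase a) = m.factorial := by
      intro a ha
      rw [Multiset.mem_toFinset] at ha
      exact ih _ (hM.erase a) (by rw [Multiset.card_erase_of_mem ha, hc]; rfl)
    rw [Finset.sum_congr rfl h1, Finset.sum_const, smul_eq_mul]
    rw [Multiset.toFinset_card_of_nodup hM, hc, Nat.factorial_succ]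

lemma perms_shape : ∀ (s m : ℕ) (D : Multiset (Fin n)) (j : Fin n), D.Nodup → j ∉ D →
    D.card + m = s → m.factorial * perms s (D + Multiset.replicate m j) = s.factorial := by
  intro s
  induction s using Nat.strong_induction_on with
  | _ s ih =>
    intro m D j hD hj hc
    match m with
    | 0 =>
      rw [Multiset.replicate_zero, add_zero, Nat.factorial_zero, one_mul]
      exact perms_nodup s D hD (by omega)
    | m+1 =>
      obtain rfl : s = (D.card + m) + 1 := by omega
      rw [perms_succ]
      have htf : (D + Multiset.replicate (m+1) j).toFinset = insert j D.toFinset := by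
        rw [Multiset.toFinset_add, Multiset.toFinset_replicate]
        simp only [Nat.add_one_ne_zero, if_false]
        rw [Finset.union_comm]
        rfl
      have hjD : j ∉ D.toFinset := by simpa using hj
      rw [htf, Finset.sum_insert hjD]
      have hej : (D + Multiset.replicate (m+1) j).erase j = D + Multiset.replicate m j := by
        rw [Multiset.erase_add_right_pos _ (by simp), Multiset.replicate_succ,
          Multiset.erase_cons_head]
      have hea : ∀ a ∈ D.toFinset,
          (D + Multiset.replicate (m+1) j).erase a = D.erase a + Multiset.replicate (m+1) j := by
        intro a ha
        exact Multiset.erase_add_left_pos _ (Multiset.mem_toFinset.mp ha)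
      rw [hej, Finset.sum_congr rfl fun a ha => congrArg _ (hea a ha)]
      have h1 : Nat.factorial m * perms (D.card + m) (D + Multiset.replicate m j) =
          (D.card + m).factorial :=
        ih _ (by omega) m D j hD hj rfl
      have h2 : ∀ a ∈ D.toFinset, Nat.factorial (m+1) *
          perms (D.card + m) (D.erase a + Multiset.replicate (m+1) j) = (D.card + m).factorial := by
        intro a ha
        have haD : a ∈ D := Multiset.mem_toFinset.mp ha
        refine ih _ (by omega) (m+1) (D.erase a) j (hD.erase a) ?_ ?_
        · exact fun h => hj (Multiset.mem_of_mem_erase h)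
        · have hpos : 0 < Multiset.card D := Multiset.card_pos_iff_exists_mem.mpr ⟨a, haD⟩
          rw [Multiset.card_erase_of_mem haD, Nat.pred_eq_sub_one]
          omega
      rw [Nat.mul_add, Finset.mul_sum]
      rw [Finset.sum_congr rfl h2, Finset.sum_const, smul_eq_mul,
        Multiset.toFinset_card_of_nodup hD]
      have h3 : Nat.factorial (m+1) * perms (D.card + m) (D + Multiset.replicate m j)
          = (m+1) * (D.card + m).factorial := by
        rw [Nat.factorial_succ, mul_assoc, h1]
      rw [h3, show D.card + m + 1 = (D.card + m) + 1 from rfl, Nat.factorial_succ]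
      ring

end counting


lemma sum_ind {α : Type*} [Fintype α] (p : α → Prop) [DecidablePred p] (c : ℝ) :
    ∑ a : α, (if p a then c else 0) = ((Finset.univ.filter p).card : ℝ) * c := by
  rw [← Finset.sum_filter, Finset.sum_const, nsmul_eq_mul]

lemma edge_bound {n k : ℕ} [NeZero k] (e : Finset (Fin n)) (he : e.Nonempty)
    (hcard : e.card ≤ k) (i : Fin n) :
    ∑ idx : Fin k → Fin n, (if idx 0 = i then
      (if e.card = k ∧ idxMultiset idx = e.val then 1 / (Nat.factorial (k - 1) : ℝ)
       else if e.card < k ∧ ∃ j ∈ e, idxMultiset idx = e.val + Multiset.replicate (k - e.card) j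
         then (Nat.factorial (k - e.card + 1) : ℝ) / (Nat.factorial k : ℝ)
       else 0) else 0) ≤ if i ∈ e then 1 else 0 := by
  have hk1 : 1 ≤ k := Nat.one_le_iff_ne_zero.mpr (NeZero.ne k)
  rcases eq_or_lt_of_le hcard with hk | hk
  · -- e.card = k
    have hrw : ∀ idx : Fin k → Fin n,
        (if idx 0 = i then
          (if e.card = k ∧ idxMultiset idx = e.val then 1 / (Nat.factorial (k - 1) : ℝ)
           else if e.card < k ∧ ∃ j ∈ e, idxMultiset idx = e.val + Multiset.replicate (k - e.card) j
             then (Nat.factorial (k - e.card + 1) : ℝ) / (Nat.factorial k : ℝ)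
           else 0) else 0)
        = if idx 0 = i ∧ idxMultiset idx = e.val then 1 / (Nat.factorial (k - 1) : ℝ) else 0 := by
      intro idx
      by_cases h0 : idx 0 = i
      · simp [h0, hk, lt_irrefl]
      · simp [h0]
    rw [Finset.sum_congr rfl fun idx _ => hrw idx, sum_ind]
    show (permsAt k i e.val : ℝ) * _ ≤ _
    rw [permsAt_eq]
    by_cases hie : i ∈ e
    · rw [if_pos (show i ∈ e.val from hie), if_pos hie]
      rw [perms_nodup (k-1) _ (e.nodup.erase i)
        (by rw [Multiset.card_erase_of_mem (show i ∈ e.val from hie)]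
            show (Finset.card e).pred = k - 1
            rw [hk]; rfl)]
      rw [mul_one_div, div_self]
      exact_mod_cast (Nat.factorial_ne_zero (k-1))
    · rw [if_neg (show i ∉ e.val from hie), if_neg hie, Nat.cast_zero, zero_mul]
  · -- e.card < k
    set m := k - e.card with hmdef
    have hm1 : 1 ≤ m := by omega
    have hkm : k = e.card + m := by omega
    have hrw : ∀ idx : Fin k → Fin n,
        (if idx 0 = i then
          (if e.card = k ∧ idxMultiset idx = e.val then 1 / (Nat.factorial (k - 1) : ℝ)
           else if e.card < k ∧ ∃ j ∈ e, idxMultiset idx = e.val + Multiset.replicate (k - e.card) j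
             then (Nat.factorial (k - e.card + 1) : ℝ) / (Nat.factorial k : ℝ)
           else 0) else 0)
        = if idx 0 = i ∧ ∃ j ∈ e, idxMultiset idx = e.val + Multiset.replicate m j
            then (Nat.factorial (m + 1) : ℝ) / (Nat.factorial k : ℝ) else 0 := by
      intro idx
      by_cases h0 : idx 0 = i
      · simp [h0, hk, Nat.ne_of_lt hk, ← hmdef]
      · simp [h0]
    rw [Finset.sum_congr rfl fun idx _ => hrw idx, sum_ind]
    have hc0 : (0:ℝ) ≤ (Nat.factorial (m + 1) : ℝ) / (Nat.factorial k : ℝ) := by positivity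
    by_cases hie : i ∈ e
    · rw [if_pos hie]
      -- bound the count
      have hsub : (Finset.univ.filter fun idx : Fin k → Fin n =>
            idx 0 = i ∧ ∃ j ∈ e, idxMultiset idx = e.val + Multiset.replicate m j) ⊆
          e.biUnion (fun j => Finset.univ.filter fun idx : Fin k → Fin n =>
            idx 0 = i ∧ idxMultiset idx = e.val + Multiset.replicate m j) := by
        intro idx hidx
        simp only [mem_filter, mem_univ, true_and] at hidx
        obtain ⟨h0, j, hj, hMj⟩ := hidx
        exact Finset.mem_biUnion.mpr ⟨j, hj, by simp [h0, hMj]⟩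
      have hN : (Finset.univ.filter fun idx : Fin k → Fin n =>
            idx 0 = i ∧ ∃ j ∈ e, idxMultiset idx = e.val + Multiset.replicate m j).card ≤
          ∑ j ∈ e, permsAt k i (e.val + Multiset.replicate m j) :=
        le_trans (Finset.card_le_card hsub) (Finset.card_biUnion_le)
      -- values
      have hgi : Nat.factorial m * permsAt k i (e.val + Multiset.replicate m i)
          = Nat.factorial (k-1) := by
        rw [permsAt_eq, if_pos (Multiset.mem_add.mpr (Or.inl hie)),
          Multiset.erase_add_left_pos _ (show i ∈ e.val from hie)]
        refine perms_shape (k-1) m (e.val.erase i) i (e.nodup.erase i) (e.nodup.notMem_erase) ?_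
        rw [Multiset.card_erase_of_mem (show i ∈ e.val from hie)]
        have : 1 ≤ e.card := Finset.card_pos.mpr ⟨i, hie⟩
        show (Finset.card e).pred + m = k - 1
        rw [Nat.pred_eq_sub_one]
        clear hrw hsub hN
        omega
      have hgj : ∀ j ∈ e.erase i, Nat.factorial (m+1) * permsAt k i (e.val + Multiset.replicate m j)
          = Nat.factorial (k-1) := by
        intro j hj
        obtain ⟨hne, hje⟩ := Finset.mem_erase.mp hj
        have hjm : j ∈ e.val.erase i := Multiset.mem_erase_of_ne hne |>.mpr hje
        have hrwM : e.val.erase i + Multiset.replicate m j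
            = (e.val.erase i).erase j + Multiset.replicate (m+1) j := by
          conv_lhs => rw [← Multiset.cons_erase hjm]
          rw [Multiset.cons_add, Multiset.replicate_succ, Multiset.add_cons]
        rw [permsAt_eq, if_pos (Multiset.mem_add.mpr (Or.inl hie)),
          Multiset.erase_add_left_pos _ (show i ∈ e.val from hie), hrwM]
        refine perms_shape (k-1) (m+1) _ j ((e.nodup.erase i).erase j)
          ((e.nodup.erase i).notMem_erase) ?_
        rw [Multiset.card_erase_of_mem hjm, Multiset.card_erase_of_mem (show i ∈ e.val from hie)]
        have h2 : 2 ≤ e.card := Finset.one_lt_card.mpr ⟨i, hie, j, hje, fun h => hne h.symm⟩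
        show ((Finset.card e).pred).pred + (m+1) = k - 1
        rw [Nat.pred_eq_sub_one, Nat.pred_eq_sub_one]
        clear hrw hsub hN hgi
        omega
      -- numeric bound
      have hs1 : 1 ≤ e.card := Finset.card_pos.mpr ⟨i, hie⟩
      have hecard : (e.erase i).card = e.card - 1 := Finset.card_erase_of_mem hie
      have hFne : ((Nat.factorial (k-1)) : ℝ) ≠ 0 := by exact_mod_cast Nat.factorial_ne_zero _
      have hane : ((Nat.factorial m) : ℝ) ≠ 0 := by exact_mod_cast Nat.factorial_ne_zero _
      have hbne : ((Nat.factorial (m+1)) : ℝ) ≠ 0 := by exact_mod_cast Nat.factorial_ne_zero _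
      have hkne : (k : ℝ) ≠ 0 := Nat.cast_ne_zero.mpr (NeZero.ne k)
      have hgiR : (permsAt k i (e.val + Multiset.replicate m i) : ℝ)
          = (Nat.factorial (k-1) : ℝ) / (Nat.factorial m : ℝ) := by
        rw [eq_div_iff hane, mul_comm]
        exact_mod_cast hgi
      have hgjR : ∀ j ∈ e.erase i, (permsAt k i (e.val + Multiset.replicate m j) : ℝ)
          = (Nat.factorial (k-1) : ℝ) / (Nat.factorial (m+1) : ℝ) := by
        intro j hj
        rw [eq_div_iff hbne, mul_comm]
        exact_mod_cast hgj j hj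
      have hsum : ((∑ j ∈ e, permsAt k i (e.val + Multiset.replicate m j) : ℕ) : ℝ)
          = (Nat.factorial (k-1) : ℝ) / (Nat.factorial m : ℝ)
            + ((e.card : ℝ) - 1) * ((Nat.factorial (k-1) : ℝ) / (Nat.factorial (m+1) : ℝ)) := by
        rw [← Finset.add_sum_erase e _ hie]
        push_cast
        rw [hgiR, Finset.sum_congr rfl hgjR, Finset.sum_const, nsmul_eq_mul, hecard]
        have : ((e.card - 1 : ℕ) : ℝ) = (e.card : ℝ) - 1 := by
          push_cast [Nat.cast_sub hs1]; ring
        rw [this]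
      calc ((Finset.univ.filter fun idx : Fin k → Fin n =>
            idx 0 = i ∧ ∃ j ∈ e, idxMultiset idx = e.val + Multiset.replicate m j).card : ℝ)
            * ((Nat.factorial (m + 1) : ℝ) / (Nat.factorial k : ℝ))
          ≤ ((∑ j ∈ e, permsAt k i (e.val + Multiset.replicate m j) : ℕ) : ℝ)
            * ((Nat.factorial (m + 1) : ℝ) / (Nat.factorial k : ℝ)) := by
            apply mul_le_mul_of_nonneg_right _ hc0
            exact_mod_cast hN
        _ = 1 := by
            rw [hsum]
            have hkfac : (Nat.factorial k : ℝ) = (k : ℝ) * (Nat.factorial (k-1) : ℝ) := by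
              exact_mod_cast (Nat.mul_factorial_pred (by omega : k ≠ 0)).symm
            have hbfac : (Nat.factorial (m+1) : ℝ) = ((m:ℝ)+1) * (Nat.factorial m : ℝ) := by
              exact_mod_cast (Nat.factorial_succ m)
            have hksm : (k : ℝ) = (e.card : ℝ) + (m : ℝ) := by
              exact_mod_cast hkm
            rw [hkfac, hbfac, hksm]
            have hs0 : (0:ℝ) < (e.card : ℝ) := by exact_mod_cast hs1
            have hm0 : (0:ℝ) ≤ (m:ℝ) := m.cast_nonneg
            generalize (Nat.factorial (k-1) : ℝ) = a at hFne ⊢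
            generalize (Nat.factorial m : ℝ) = b at hane ⊢
            generalize (e.card : ℝ) = c at hs0 ⊢
            generalize (m : ℝ) = mm at hm0 ⊢
            have hmm1 : mm + 1 ≠ 0 := ne_of_gt (by linarith)
            have hcm : c + mm ≠ 0 := ne_of_gt (by linarith)
            field_simp
            ring
    · rw [if_neg hie]
      have hz : (Finset.univ.filter fun idx : Fin k → Fin n =>
          idx 0 = i ∧ ∃ j ∈ e, idxMultiset idx = e.val + Multiset.replicate m j) = ∅ := by
        rw [Finset.filter_eq_empty_iff]
        rintro idx - ⟨h0, j, hj, hMj⟩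
        have : i ∈ e.val + Multiset.replicate m j := hMj ▸ h0 ▸ mem_idxMultiset idx 0
        rcases Multiset.mem_add.mp this with h | h
        · exact hie h
        · exact hie (Multiset.eq_of_mem_replicate h ▸ hj)
      rw [hz]
      simp

lemma adjEntry_nonneg {n k : ℕ} (E : Finset (Finset (Fin n))) (idx : Fin k → Fin n) :
    0 ≤ (adjEntry k E idx : ℝ) := by
  refine Finset.sum_nonneg fun e _ => ?_
  split_ifs <;> positivity

lemma sum_row_le {n k : ℕ} [NeZero k] (E : Finset (Finset (Fin n))) (hE : ∀ e ∈ E, e.Nonempty)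
    (hcard : ∀ e ∈ E, e.card ≤ k) (i : Fin n) :
    ∑ idx' : Fin k → Fin n, (if idx' 0 = i then (adjEntry k E idx' : ℝ) else 0) ≤ (deg E i : ℝ) := by
  have hswap : ∑ idx' : Fin k → Fin n, (if idx' 0 = i then (adjEntry k E idx' : ℝ) else 0)
      = ∑ e ∈ E, ∑ idx' : Fin k → Fin n, (if idx' 0 = i then
        (if e.card = k ∧ idxMultiset idx' = e.val then 1 / (Nat.factorial (k - 1) : ℝ)
         else if e.card < k ∧ ∃ j ∈ e, idxMultiset idx' = e.val + Multiset.replicate (k - e.card) j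
           then (Nat.factorial (k - e.card + 1) : ℝ) / (Nat.factorial k : ℝ)
         else 0) else 0) := by
    rw [Finset.sum_comm]
    refine Finset.sum_congr rfl fun idx' _ => ?_
    rw [adjEntry]
    split
    · rfl
    · exact (Finset.sum_const_zero).symm
  rw [hswap]
  have hdeg : (deg E i : ℝ) = ∑ e ∈ E, (if i ∈ e then (1:ℝ) else 0) := by
    have h1 : deg E i = ∑ e ∈ E, if i ∈ e then 1 else 0 := Finset.card_filter _ _
    rw [h1]
    push_cast [apply_ite (Nat.cast : ℕ → ℝ)]
    rfl
  rw [hdeg]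
  exact Finset.sum_le_sum fun e heE => edge_bound e (hE e heE) (hcard e heE) i


/-- with a positive Perron vector `x` for `ρ = ρ(A_H)` and a nonzero
entry position `(i₁,…,i_k)` maximizing `x_{i₁}⋯x_{i_k}`, for each `j` one has
`ρ x_{i_j}^k ≤ d_{i_j} x_{i₁}⋯x_{i_k}`, and hence `ρ^k ≤ d_{i₁}⋯d_{i_k}`. -/
theorem stmt19 {n k : ℕ} [NeZero k] (E : Finset (Finset (Fin n)))
    (hE : ∀ e ∈ E, e.Nonempty) (hconn : Conn E) (hrank : HasRank E k)
    (x : Fin n → ℝ) (hx : ∀ i, 0 < x i)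
    (heig : ∀ i, tApply k (adjEntry k E) x i = specRad k (adjEntry k E) * x i ^ (k - 1))
    (idx : Fin k → Fin n) (hnz : (adjEntry k E idx : ℝ) ≠ 0)
    (hmax : ∀ idx' : Fin k → Fin n, (adjEntry k E idx' : ℝ) ≠ 0 →
      ∏ j, x (idx' j) ≤ ∏ j, x (idx j)) :
    (∀ j : Fin k, specRad k (adjEntry k E) * x (idx j) ^ k ≤
      (deg E (idx j) : ℝ) * ∏ t, x (idx t)) ∧
    specRad k (adjEntry k E) ^ k ≤ ∏ j, (deg E (idx j) : ℝ) := by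
  have hk1 : 1 ≤ k := Nat.one_le_iff_ne_zero.mpr (NeZero.ne k)
  set ρ := specRad k (adjEntry k E) with hρdef
  set P := ∏ t, x (idx t) with hPdef
  have hP : 0 < P := Finset.prod_pos fun t _ => hx _
  -- ρ ≥ 0
  have hρ0 : 0 ≤ ρ := by
    have h1 : 0 ≤ tApply k (adjEntry k E) x (idx 0) := by
      refine Finset.sum_nonneg fun idx' _ => ?_
      split
      · exact mul_nonneg (adjEntry_nonneg E idx') (Finset.prod_nonneg fun t _ => (hx _).le)
      · exact le_rfl
    rw [heig] at h1
    exact (mul_nonneg_iff_of_pos_right (pow_pos (hx _) (k-1))).mp h1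
  have part1 : ∀ j : Fin k, ρ * x (idx j) ^ k ≤ (deg E (idx j) : ℝ) * P := by
    intro j
    set i := idx j with hidef
    have hstep1 : ρ * x i ^ k = tApply k (adjEntry k E) x i * x i := by
      rw [heig i]
      have : x i ^ k = x i ^ (k-1) * x i := by
        rw [← pow_succ]
        congr 1
        omega
      rw [this]; ring
    have hstep2 : tApply k (adjEntry k E) x i * x i
        = ∑ idx' : Fin k → Fin n, (if idx' 0 = i then
            (adjEntry k E idx' : ℝ) * ∏ t, x (idx' t) else 0) := by
      rw [tApply, Finset.sum_mul]
      refine Finset.sum_congr rfl fun idx' _ => ?_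
      rw [ite_mul, zero_mul]
      split
      · next h0 =>
        rw [mul_assoc]
        congr 1
        rw [mul_comm, ← h0]
        exact Finset.mul_prod_erase Finset.univ (fun t => x (idx' t)) (Finset.mem_univ 0)
      · rfl
    have hstep3 : ∑ idx' : Fin k → Fin n, (if idx' 0 = i then
            (adjEntry k E idx' : ℝ) * ∏ t, x (idx' t) else 0)
        ≤ ∑ idx' : Fin k → Fin n, (if idx' 0 = i then (adjEntry k E idx' : ℝ) * P else 0) := by
      refine Finset.sum_le_sum fun idx' _ => ?_
      split
      · rcases eq_or_ne (adjEntry k E idx' : ℝ) 0 with h | h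
        · rw [h, zero_mul, zero_mul]
        · exact mul_le_mul_of_nonneg_left (hmax idx' h) (adjEntry_nonneg E idx')
      · exact le_rfl
    have hstep4 : ∑ idx' : Fin k → Fin n, (if idx' 0 = i then (adjEntry k E idx' : ℝ) * P else 0)
        = (∑ idx' : Fin k → Fin n, (if idx' 0 = i then (adjEntry k E idx' : ℝ) else 0)) * P := by
      rw [Finset.sum_mul]
      refine Finset.sum_congr rfl fun idx' _ => ?_
      rw [ite_mul, zero_mul]
    have hstep5 := sum_row_le E hE hrank.1 i
    calc ρ * x i ^ k = tApply k (adjEntry k E) x i * x i := hstep1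
      _ ≤ (∑ idx' : Fin k → Fin n, (if idx' 0 = i then (adjEntry k E idx' : ℝ) else 0)) * P := by
          rw [hstep2, ← hstep4]; exact hstep3
      _ ≤ (deg E i : ℝ) * P := mul_le_mul_of_nonneg_right hstep5 hP.le
  refine ⟨part1, ?_⟩
  have hprod : ∏ j : Fin k, (ρ * x (idx j) ^ k) ≤ ∏ j : Fin k, ((deg E (idx j) : ℝ) * P) :=
    Finset.prod_le_prod (fun j _ => mul_nonneg hρ0 (pow_nonneg (hx _).le k))
      (fun j _ => part1 j)
  have hL : ∏ j : Fin k, (ρ * x (idx j) ^ k) = ρ ^ k * P ^ k := by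
    rw [Finset.prod_mul_distrib, Finset.prod_const, Finset.prod_pow, Finset.card_univ,
      Fintype.card_fin, hPdef]
  have hR : ∏ j : Fin k, ((deg E (idx j) : ℝ) * P) = (∏ j, (deg E (idx j) : ℝ)) * P ^ k := by
    rw [Finset.prod_mul_distrib, Finset.prod_const, Finset.card_univ, Fintype.card_fin]
  rw [hL, hR] at hprod
  exact le_of_mul_le_mul_right hprod (pow_pos hP k)
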